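/- Closed form of the S4D gradient with respect to the sampling-interval parameter (from the proof of Theorem 5.1): Let d = 1, A ∈ ℝ^{n×n} diagonal and invertible, B ∈ ℝ^{n×1}, C ∈ ℝ^{1×n}, b ∈ ℝ, and write Ā = exp(exp(b) A). Then for every input u ∈ ℝ^L, the derivative of the final S4D output with respect to b equals ∂Γ_S4D(u)_L/∂b = C Σ_{j=1}^L Ā^{L−j} u_j exp(b) (Ā + (L−j)(Ā − I)) B. -/

import Mathlib

open Matrix Filter Asymptotics MeasureTheory Real Topology

noncomputable section

/-- Matrix exponential over the reals. -/
def mexp {n : ℕ} (A : Matrix (Fin n) (Fin n) ℝ) : Matrix (Fin n) (Fin n) ℝ :=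
  NormedSpace.exp A

/-- The softplus function `z ↦ log (1 + e^z)`. -/
def softplus (z : ℝ) : ℝ := Real.log (1 + Real.exp z)

/-- Time-varying linear state recursion: `x 0 = 0`,
`x (k+1) = Abar k *ᵥ x k + u k • Bbar k`.  (Index `k : ℕ` is the 0-based
position of the input, so `x (k+1)` is the state `x_{k+1}` after seeing
inputs `u_1 = u 0, …, u_{k+1} = u k`.) -/
def tvState {n : ℕ} (Abar : ℕ → Matrix (Fin n) (Fin n) ℝ) (Bbar : ℕ → Fin n → ℝ)
    (u : ℕ → ℝ) : ℕ → Fin n → ℝ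
  | 0 => 0
  | k + 1 => (Abar k) *ᵥ (tvState Abar Bbar u k) + u k • Bbar k

/-- Zero-padded extension of a finite scalar sequence `(u_1, …, u_L)`
(`u 0` is `u_1`, …, `u ⟨L-1⟩` is `u_L`). -/
def seq {L : ℕ} (u : Fin L → ℝ) : ℕ → ℝ := fun k => if h : k < L then u ⟨k, h⟩ else 0

/-- Zero-padded extension of a finite vector-valued sequence. -/
def seqd {L d : ℕ} (u : Fin L → Fin d → ℝ) : ℕ → Fin d → ℝ :=
  fun k => if h : k < L then u ⟨k, h⟩ else 0

/-- Final output `Γ_S4D(u)_L` of a single-channel (`d = 1`) S4D unit: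
`Ā = exp(exp(b) A)`, `B̄ = A⁻¹(Ā − I)B`, `x_k = Ā x_{k-1} + B̄ u_k`, `x_0 = 0`,
`y_k = C x_k`. -/
def s4dScalar {n : ℕ} (A : Matrix (Fin n) (Fin n) ℝ) (B C : Fin n → ℝ) (b : ℝ)
    (L : ℕ) (u : ℕ → ℝ) : ℝ :=
  C ⬝ᵥ tvState (fun _ => mexp (Real.exp b • A))
      (fun _ => A⁻¹ *ᵥ ((mexp (Real.exp b • A) - 1) *ᵥ B)) u L

/-- Final output `Γ_S6(u)_L` of a single-channel (`d = 1`) S6 unit: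
`Δ_k = softplus(w u_k + b)`, `Ā_k = exp(Δ_k A)`, `B̄_k = A⁻¹(Ā_k − I)B u_k`,
`x_k = Ā_k x_{k-1} + B̄_k u_k`, `x_0 = 0`, `y_k = (u_k C) x_k`. -/
def s6Scalar {n : ℕ} (A : Matrix (Fin n) (Fin n) ℝ) (B C : Fin n → ℝ) (w b : ℝ)
    (L : ℕ) (u : ℕ → ℝ) : ℝ :=
  u (L - 1) *
    (C ⬝ᵥ tvState (fun k => mexp (softplus (w * u k + b) • A))
        (fun k => u k • (A⁻¹ *ᵥ ((mexp (softplus (w * u k + b) • A) - 1) *ᵥ B))) u L)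

/-- **Closed form of the S4D gradient with respect to the sampling-interval
parameter** (from the proof of Theorem 5.1).  With `Ā = exp(exp(b) A)`,
`∂Γ_S4D(u)_L/∂b = C Σ_{j=1}^L Ā^{L−j} u_j exp(b) (Ā + (L−j)(Ā − I)) B`. -/
lemma mexp_smul_diag {n : ℕ} (s : ℝ) (w : Fin n → ℝ) :
    mexp (s • diagonal w) = diagonal fun i => Real.exp (s * w i) := by
  rw [mexp, ← diagonal_smul, Matrix.exp_diagonal, Pi.exp_def]
  simp [Real.exp_eq_exp_ℝ]

lemma tvState_const {n : ℕ} (P : Matrix (Fin n) (Fin n) ℝ) (Q : Fin n → ℝ) (u : ℕ → ℝ) :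
    ∀ k, tvState (fun _ => P) (fun _ => Q) u k
      = ∑ j : Fin k, u j • ((P ^ (k - 1 - (j : ℕ))) *ᵥ Q)
  | 0 => by simp [tvState]
  | k + 1 => by
    rw [tvState, tvState_const P Q u k, Fin.sum_univ_castSucc]
    have hmv : P *ᵥ (∑ j : Fin k, u j • ((P ^ (k - 1 - (j : ℕ))) *ᵥ Q))
        = ∑ j : Fin k, u j • ((P ^ (k - (j : ℕ))) *ᵥ Q) := by
      rw [← Matrix.mulVecLin_apply, map_sum]
      refine Finset.sum_congr rfl fun j _ => ?_
      have hj : k - 1 - (j : ℕ) + 1 = k - (j : ℕ) := by have := j.isLt; omega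
      rw [_root_.map_smul, Matrix.mulVecLin_apply, Matrix.mulVec_mulVec, ← pow_succ', hj]
    rw [hmv]
    congr 1
    simp [Nat.sub_self]

theorem s4d_gradient_closed_form
    (n L : ℕ) (hn : 1 ≤ n) (hL : 1 ≤ L)
    (A : Matrix (Fin n) (Fin n) ℝ)
    (hAdiag : ∀ i j : Fin n, i ≠ j → A i j = 0) (hA : IsUnit A.det)
    (B C : Fin n → ℝ) (b : ℝ) (u : Fin L → ℝ) :
    deriv (fun b' => s4dScalar A B C b' L (seq u)) b =
      C ⬝ᵥ ∑ j : Fin L,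
        (u j * Real.exp b) •
          (((mexp (Real.exp b • A)) ^ (L - 1 - (j : ℕ))) *ᵥ
            ((mexp (Real.exp b • A) +
                ((L - 1 - (j : ℕ) : ℕ) : ℝ) • (mexp (Real.exp b • A) - 1)) *ᵥ B)) := by
  set v : Fin n → ℝ := fun i => A i i with hv_def
  have hAv : A = diagonal v := by
    ext i j
    by_cases h : i = j
    · subst h; simp [diagonal, hv_def]
    · simp [diagonal, h, hAdiag i j h]
  have hv : ∀ i, v i ≠ 0 := by
    intro i
    rw [hAv, det_diagonal] at hA
    have := isUnit_iff_ne_zero.mp hA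
    intro h0
    exact this (Finset.prod_eq_zero (Finset.mem_univ i) h0)
  have hinv : A⁻¹ = diagonal fun i => (v i)⁻¹ := by
    rw [hAv, Matrix.inv_diagonal]
    refine congrArg diagonal ?_
    exact Ring.inverse_unit
      ⟨v, fun i => (v i)⁻¹, by funext i; exact mul_inv_cancel₀ (hv i),
        by funext i; exact inv_mul_cancel₀ (hv i)⟩
  -- scalar closed form
  have key : ∀ b', s4dScalar A B C b' L (seq u)
      = ∑ j : Fin L, ∑ i : Fin n,
          (u j * C i * B i * (v i)⁻¹) *
            (Real.exp (Real.exp b' * (((L - 1 - (j : ℕ) : ℕ) : ℝ) * v i)) *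
              (Real.exp (Real.exp b' * v i) - 1)) := by
    intro b'
    rw [s4dScalar, tvState_const, hinv]
    rw [hAv, mexp_smul_diag]
    simp only [diagonal_pow, Matrix.sub_mulVec, Matrix.one_mulVec, dotProduct,
      Finset.mul_sum, Pi.smul_apply, Finset.sum_apply, smul_eq_mul, Pi.sub_apply]
    simp only [Matrix.mulVec_diagonal, Pi.pow_apply, Pi.sub_apply]
    rw [Finset.sum_comm]
    refine Finset.sum_congr rfl fun j _ => Finset.sum_congr rfl fun i _ => ?_
    have hs : _root_.seq u (j : ℕ) = u j := by simp [_root_.seq, j.isLt]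
    have he : rexp (rexp b' * (((L - 1 - (j : ℕ) : ℕ) : ℝ) * v i))
        = rexp (rexp b' * v i) ^ (L - 1 - (j : ℕ)) := by
      rw [show rexp b' * (((L - 1 - (j : ℕ) : ℕ) : ℝ) * v i)
          = ((L - 1 - (j : ℕ) : ℕ) : ℝ) * (rexp b' * v i) by ring, Real.exp_nat_mul]
    rw [hs, he]
    ring
  have hF : HasDerivAt (fun b' => ∑ j : Fin L, ∑ i : Fin n,
      (u j * C i * B i * (v i)⁻¹) *
        (Real.exp (Real.exp b' * (((L - 1 - (j : ℕ) : ℕ) : ℝ) * v i)) *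
          (Real.exp (Real.exp b' * v i) - 1)))
      (∑ j : Fin L, ∑ i : Fin n,
        (u j * C i * B i * (v i)⁻¹) *
          (Real.exp (Real.exp b * (((L - 1 - (j : ℕ) : ℕ) : ℝ) * v i)) *
              (Real.exp b * (((L - 1 - (j : ℕ) : ℕ) : ℝ) * v i)) *
              (Real.exp (Real.exp b * v i) - 1)
            + Real.exp (Real.exp b * (((L - 1 - (j : ℕ) : ℕ) : ℝ) * v i)) *
              (Real.exp (Real.exp b * v i) * (Real.exp b * v i)))) b := by
    refine HasDerivAt.fun_sum fun j _ => HasDerivAt.fun_sum fun i _ => ?_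
    have h1 : HasDerivAt
        (fun b' => Real.exp (Real.exp b' * (((L - 1 - (j : ℕ) : ℕ) : ℝ) * v i)))
        (Real.exp (Real.exp b * (((L - 1 - (j : ℕ) : ℕ) : ℝ) * v i)) *
          (Real.exp b * (((L - 1 - (j : ℕ) : ℕ) : ℝ) * v i))) b :=
      ((Real.hasDerivAt_exp b).mul_const _).exp
    have h2 : HasDerivAt (fun b' => Real.exp (Real.exp b' * v i) - 1)
        (Real.exp (Real.exp b * v i) * (Real.exp b * v i)) b :=
      (((Real.hasDerivAt_exp b).mul_const _).exp).sub_const 1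
    exact (h1.mul h2).const_mul _
  rw [funext key, hF.deriv]
  rw [hAv, mexp_smul_diag]
  simp only [diagonal_pow, Matrix.add_mulVec, Matrix.smul_mulVec, Matrix.sub_mulVec,
    Matrix.one_mulVec, Matrix.mulVec_diagonal, dotProduct, Finset.mul_sum, Pi.smul_apply,
    Finset.sum_apply, smul_eq_mul, Pi.sub_apply, Pi.add_apply, Pi.pow_apply]
  rw [Finset.sum_comm]
  refine Finset.sum_congr rfl fun i _ => Finset.sum_congr rfl fun j _ => ?_
  have he : rexp (rexp b * (((L - 1 - (j : ℕ) : ℕ) : ℝ) * v i))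
      = rexp (rexp b * v i) ^ (L - 1 - (j : ℕ)) := by
    rw [show rexp b * (((L - 1 - (j : ℕ) : ℕ) : ℝ) * v i)
        = ((L - 1 - (j : ℕ) : ℕ) : ℝ) * (rexp b * v i) by ring, Real.exp_nat_mul]
  rw [he]
  field_simp [hv i]
  ring
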